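/- For every integer j ≥ 2 and all p_1, p_2 ∈ (0,1] with p_1 ≠ p_2, one has f_{2,j}(p_1, p_2) > f_{2,j}( (p_1 + p_2)/2, (p_1 + p_2)/2 ). -/

import Mathlib

open MeasureTheory

/-- The law of a geometric random variable with success probability `p`,
supported on the positive integers: `P(Y = k) = (1 - p)^(k-1) * p` for `k ≥ 1`. -/
noncomputable def geomMeasure (p : ℝ) : Measure ℕ :=
  Measure.count.withDensity
    (fun k => if 1 ≤ k then ENNReal.ofReal ((1 - p) ^ (k - 1) * p) else 0)

/-- `f_{m,j}(p_1, …, p_m) = P(Y_1 + ⋯ + Y_m > j)` where `Y_1, …, Y_m` are independent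
with `Y_i ~ Geom(p_i)`; realized via the product of the geometric laws. -/
noncomputable def geomF (m j : ℕ) (p : Fin m → ℝ) : ENNReal :=
  Measure.pi (fun i => geomMeasure (p i)) {x | j < ∑ i, x i}

open Finset

def wR (p : ℝ) (k : ℕ) : ℝ := if 1 ≤ k then (1-p)^(k-1) * p else 0

def S (n : ℕ) (x y : ℝ) : ℝ := ∑ k ∈ range (n+1), x^k * y^(n-k)


lemma wR_nonneg {p : ℝ} (hp : p ∈ Set.Ioc (0:ℝ) 1) (k : ℕ) : 0 ≤ wR p k := by
  unfold wR
  split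
  · have h1 : (0:ℝ) ≤ 1 - p := by linarith [hp.2]
    have h2 : (0:ℝ) ≤ p := le_of_lt hp.1
    positivity
  · exact le_refl _

lemma S_symm (n : ℕ) (x y : ℝ) : S n x y = S n y x := by
  unfold S
  rw [← Finset.sum_range_reflect]
  refine Finset.sum_congr rfl fun k hk => ?_
  rw [Finset.mem_range] at hk
  have h1 : n + 1 - 1 - k = n - k := by omega
  have h2 : n - (n - k) = k := by omega
  rw [h1, h2]; ring

lemma S_rec (n : ℕ) (x y : ℝ) : S (n+1) x y = x * S n x y + y^(n+1) := by
  unfold S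
  rw [Finset.sum_range_succ']
  have h : ∀ k ∈ range (n+1), x^(k+1)*y^(n+1-(k+1)) = x*(x^k*y^(n-k)) := by
    intro k hk
    rw [Finset.mem_range] at hk
    have h2 : n + 1 - (k+1) = n - k := by omega
    rw [h2]; ring
  rw [Finset.sum_congr rfl h, ← Finset.mul_sum]
  simp [add_comm]

lemma S_rec' (n : ℕ) (x y : ℝ) : S (n+1) x y = y * S n x y + x^(n+1) := by
  rw [S_symm, S_rec, S_symm]

lemma S_rec2 (n : ℕ) (x y : ℝ) :
    S (n+2) x y = (x+y) * S (n+1) x y - x*y*S n x y := by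
  have h1 := S_rec (n+1) x y
  have h2 := S_rec n x y
  have h3 := S_rec' (n+1) x y
  have h4 : y^(n+1+1) = y * y^(n+1) := by ring
  rw [show n+2 = n+1+1 from rfl, h1, h4, h2]
  ring

lemma S_two_peel (n : ℕ) (x y : ℝ) :
    2 * S (n+1) x y = (x+y) * S n x y + x^(n+1) + y^(n+1) := by
  have h1 := S_rec n x y
  have h2 := S_rec' n x y
  linarith

lemma S_diag (n : ℕ) (q : ℝ) : S n q q = (n+1) * q^n := by
  unfold S
  have h : ∀ k ∈ range (n+1), q^k * q^(n-k) = q^n := by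
    intro k hk
    rw [Finset.mem_range] at hk
    rw [← pow_add]
    congr 1
    omega
  rw [Finset.sum_congr rfl h, Finset.sum_const, Finset.card_range, nsmul_eq_mul]
  push_cast; ring

lemma neg_pow_ge {d : ℝ} (hd : 0 ≤ d) (m : ℕ) : -(d^m) ≤ (-d)^m := by
  rcases Nat.even_or_odd m with h | h
  · rw [h.neg_pow]
    have := pow_nonneg hd m
    linarith
  · rw [h.neg_pow]

lemma neg_pow_le {d : ℝ} (hd : 0 ≤ d) (m : ℕ) : (-d)^m ≤ d^m := by
  rcases Nat.even_or_odd m with h | h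
  · rw [h.neg_pow]
  · rw [h.neg_pow]
    have := pow_nonneg hd m
    linarith

lemma binom_tail (n : ℕ) {q d : ℝ} (hd : 0 ≤ d) (hq : 0 ≤ q) :
    ((n:ℝ)+1) * q^n * (2*d) ≤ (q+d)^(n+1) - (q-d)^(n+1) := by
  have e1 : (q+d)^(n+1) = ∑ k ∈ range (n+2), q^k * d^(n+1-k) * ((n+1).choose k) :=
    add_pow q d (n+1)
  have e2 : (q-d)^(n+1) = ∑ k ∈ range (n+2), q^k * (-d)^(n+1-k) * ((n+1).choose k) := by
    rw [show q - d = q + (-d) by ring]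
    exact add_pow q (-d) (n+1)
  rw [e1, e2, ← Finset.sum_sub_distrib]
  have hnn : ∀ k ∈ range (n+2),
      0 ≤ q^k * d^(n+1-k) * ((n+1).choose k) - q^k * (-d)^(n+1-k) * ((n+1).choose k) := by
    intro k _
    have h1 : (-d)^(n+1-k) ≤ d^(n+1-k) := neg_pow_le hd _
    have h2 : (0:ℝ) ≤ q^k := pow_nonneg hq k
    have h3 : (0:ℝ) ≤ (((n+1).choose k : ℕ) : ℝ) := Nat.cast_nonneg _
    nlinarith [mul_le_mul_of_nonneg_left h1 (mul_nonneg h2 h3)]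
  have hmem : n ∈ range (n+2) := Finset.mem_range.mpr (by omega)
  have := Finset.single_le_sum hnn hmem
  refine le_trans (le_of_eq ?_) this
  have hsub : n + 1 - n = 1 := by omega
  rw [hsub, Nat.choose_succ_self_right]
  push_cast
  ring

lemma binom_even (n : ℕ) {q d : ℝ} (hd : 0 ≤ d) (hq : 0 ≤ q) :
    2 * q^n ≤ (q+d)^n + (q-d)^n := by
  have e1 : (q+d)^n = ∑ k ∈ range (n+1), q^k * d^(n-k) * (n.choose k) := add_pow q d n
  have e2 : (q-d)^n = ∑ k ∈ range (n+1), q^k * (-d)^(n-k) * (n.choose k) := by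
    rw [show q - d = q + (-d) by ring]
    exact add_pow q (-d) n
  rw [e1, e2, ← Finset.sum_add_distrib]
  have hnn : ∀ k ∈ range (n+1),
      0 ≤ q^k * d^(n-k) * (n.choose k) + q^k * (-d)^(n-k) * (n.choose k) := by
    intro k _
    have h1 : -(d^(n-k)) ≤ (-d)^(n-k) := neg_pow_ge hd _
    have h2 : (0:ℝ) ≤ q^k := pow_nonneg hq k
    have h3 : (0:ℝ) ≤ ((n.choose k : ℕ) : ℝ) := Nat.cast_nonneg _
    nlinarith [mul_le_mul_of_nonneg_left h1 (mul_nonneg h2 h3)]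
  have hmem : n ∈ range (n+1) := by simp
  have := Finset.single_le_sum hnn hmem
  refine le_trans (le_of_eq ?_) this
  rw [Nat.sub_self, pow_zero, Nat.choose_self]
  push_cast
  ring

lemma S_mul (n : ℕ) (x y : ℝ) : S n x y * (x - y) = x^(n+1) - y^(n+1) := by
  unfold S
  exact geom_sum₂_mul x y (n+1)

lemma S_ge (n : ℕ) {x y : ℝ} (hy : 0 ≤ y) (hxy : y < x) :
    ((n:ℝ)+1) * ((x+y)/2)^n ≤ S n x y := by
  have hd : (0:ℝ) ≤ (x-y)/2 := by linarith
  have hq : (0:ℝ) ≤ (x+y)/2 := by linarith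
  have h := binom_tail n hd hq
  have hx : (x+y)/2 + (x-y)/2 = x := by ring
  have hy2 : (x+y)/2 - (x-y)/2 = y := by ring
  rw [hx, hy2] at h
  rw [← S_mul n x y] at h
  have hpos : 0 < x - y := by linarith
  have h2 : ((n:ℝ)+1) * ((x+y)/2)^n * (x-y) ≤ S n x y * (x-y) := by
    calc ((n:ℝ)+1) * ((x+y)/2)^n * (x-y) = ((n:ℝ)+1) * ((x+y)/2)^n * (2*((x-y)/2)) := by ring
    _ ≤ S n x y * (x-y) := h
  exact le_of_mul_le_mul_right h2 hpos

lemma key (n : ℕ) {x y : ℝ} (hy : 0 ≤ y) (hx1 : x < 1) (hy1 : y < 1) (hxy : y < x) :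
    S (n+1) ((x+y)/2) ((x+y)/2) - ((x+y)/2)*((x+y)/2)*S n ((x+y)/2) ((x+y)/2)
      < S (n+1) x y - x*y*S n x y := by
  set q : ℝ := (x+y)/2 with hqdef
  have hq0 : 0 < q := by have : 0 < x := lt_of_le_of_lt hy hxy; simp [hqdef]; linarith
  have hq1 : q < 1 := by simp [hqdef]; linarith
  have hA : 2 * q^(n+1) ≤ x^(n+1) + y^(n+1) := by
    have := binom_even (n+1) (d := (x-y)/2) (q := q) (by linarith) (le_of_lt hq0)
    have hx : q + (x-y)/2 = x := by rw [hqdef]; ring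
    have hy2 : q - (x-y)/2 = y := by rw [hqdef]; ring
    rwa [hx, hy2] at this
  have hS : ((n:ℝ)+1) * q^n ≤ S n x y := S_ge n hy hxy
  have hSpos : 0 < S n x y := lt_of_lt_of_le (by positivity) hS
  have hxyq : x*y < q^2 := by rw [hqdef]; nlinarith [sq_nonneg (x-y)]
  have hpeel := S_two_peel n x y
  have hd1 : S (n+1) q q = ((n:ℝ)+2) * q^(n+1) := by
    rw [S_diag]; push_cast; ring
  have hd2 : S n q q = ((n:ℝ)+1) * q^n := S_diag n q
  have hps1 : q^(n+1) = q * q^n := by ring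
  have hps2 : q^(n+2) = q * q^(n+1) := by ring
  have h1 : (2*q - 2*(x*y)) * S n x y > (2*q - 2*q^2) * S n x y := by
    apply mul_lt_mul_of_pos_right _ hSpos
    linarith
  have h2 : (2*q - 2*q^2) * S n x y ≥ (2*q - 2*q^2) * (((n:ℝ)+1) * q^n) := by
    apply mul_le_mul_of_nonneg_left hS
    nlinarith
  rw [hd1, hd2]
  have hxy2 : x + y = 2*q := by rw [hqdef]; ring
  nlinarith [h1, h2, hA, hpeel]

noncomputable def Gr (j : ℕ) (a b : ℝ) : ℝ :=
  ∑ s ∈ range (j+1), ∑ ab ∈ antidiagonal s, wR a ab.1 * wR b ab.2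

lemma wR_zero (p : ℝ) : wR p 0 = 0 := by simp [wR]

lemma wR_succ (p : ℝ) (k : ℕ) : wR p (k+1) = (1-p)^k * p := by simp [wR]

lemma antidiag_sum (m : ℕ) (a b : ℝ) :
    ∑ ab ∈ antidiagonal (m+2), wR a ab.1 * wR b ab.2
      = a * b * S m (1-a) (1-b) := by
  rw [Finset.Nat.sum_antidiagonal_eq_sum_range_succ_mk]
  rw [Finset.sum_range_succ']
  simp only [wR_zero, zero_mul, mul_zero, add_zero]
  rw [Finset.sum_range_succ]
  have hz : m + 2 - (m + 1 + 1) = 0 := by omega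
  rw [hz, wR_zero, mul_zero, add_zero]
  have hc : ∀ k ∈ range (m+1),
      wR a (k+1) * wR b (m+2-(k+1)) = a*b*((1-a)^k * (1-b)^(m-k)) := by
    intro k hk
    rw [Finset.mem_range] at hk
    have h1 : m + 2 - (k+1) = (m - k) + 1 := by omega
    rw [h1, wR_succ, wR_succ]
    ring
  rw [Finset.sum_congr rfl hc, ← Finset.mul_sum]
  unfold S
  ring_nf

lemma Gr_base (a b : ℝ) : Gr 2 a b = a * b := by
  unfold Gr
  rw [show (2:ℕ)+1 = 3 from rfl]
  rw [Finset.sum_range_succ, Finset.sum_range_succ, Finset.sum_range_succ,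
    Finset.range_zero, Finset.sum_empty]
  rw [Finset.Nat.sum_antidiagonal_eq_sum_range_succ_mk,
    Finset.Nat.sum_antidiagonal_eq_sum_range_succ_mk,
    Finset.Nat.sum_antidiagonal_eq_sum_range_succ_mk]
  norm_num [Finset.sum_range_succ, wR]

lemma Gr_eq (n : ℕ) (a b : ℝ) :
    Gr (n+2) a b = 1 - (S (n+1) (1-a) (1-b) - (1-a)*(1-b) * S n (1-a) (1-b)) := by
  induction n with
  | zero =>
    rw [Gr_base]
    simp [S, Finset.sum_range_succ]
    ring
  | succ m ih =>
    have hstep : Gr (m+3) a b = Gr (m+2) a b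
        + ∑ ab ∈ antidiagonal (m+3), wR a ab.1 * wR b ab.2 := by
      unfold Gr
      rw [show m+3+1 = (m+3)+1 from rfl, Finset.sum_range_succ]
    rw [show m+1+2 = m+3 from rfl, hstep, ih,
      show m+3 = (m+1)+2 from rfl, antidiag_sum, S_rec2 m (1-a) (1-b)]
    ring

lemma geomMeasure_singleton (p : ℝ) (k : ℕ) :
    geomMeasure p {k} = ENNReal.ofReal (wR p k) := by
  unfold geomMeasure
  rw [withDensity_apply _ (measurableSet_singleton k), lintegral_singleton,
    Measure.count_singleton, mul_one]
  unfold wR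
  split <;> simp

lemma geomMeasure_univ {p : ℝ} (hp : p ∈ Set.Ioc (0:ℝ) 1) :
    geomMeasure p Set.univ = 1 := by
  have hq0 : (0:ℝ) ≤ 1 - p := by linarith [hp.2]
  have hq1 : 1 - p < 1 := by linarith [hp.1]
  unfold geomMeasure
  rw [withDensity_apply _ MeasurableSet.univ, Measure.restrict_univ, lintegral_count]
  rw [tsum_eq_zero_add' ENNReal.summable]
  have h0 : (if 1 ≤ (0:ℕ) then ENNReal.ofReal ((1 - p) ^ (0 - 1) * p) else 0) = 0 := by
    norm_num
  have h1 : ∀ k : ℕ, (if 1 ≤ k + 1 then ENNReal.ofReal ((1-p)^(k+1-1) * p) else 0)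
      = ENNReal.ofReal ((1-p)^k * p) := fun k => by simp
  rw [h0, zero_add, tsum_congr h1]
  have hsum : Summable (fun k : ℕ => (1-p)^k * p) :=
    (summable_geometric_of_lt_one hq0 hq1).mul_right p
  rw [← ENNReal.ofReal_tsum_of_nonneg (fun k => mul_nonneg (pow_nonneg hq0 k) (le_of_lt hp.1)) hsum]
  rw [tsum_mul_right, tsum_geometric_of_lt_one hq0 hq1]
  have : (1 - (1-p))⁻¹ * p = 1 := by
    rw [show 1 - (1-p) = p by ring, inv_mul_eq_div]
    exact div_self (ne_of_gt hp.1)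
  rw [this, ENNReal.ofReal_one]



-- embedding of pairs into functions
def e2 : ℕ × ℕ ↪ (Fin 2 → ℕ) :=
  ⟨fun ab => ![ab.1, ab.2], by
    intro a b h
    have h0 := congrFun h 0
    have h1 := congrFun h 1
    simp [Matrix.cons_val_zero, Matrix.cons_val_one] at h0 h1
    exact Prod.ext h0 h1⟩

def T (j : ℕ) : Finset (ℕ × ℕ) := (range (j+1)).biUnion (fun s => antidiagonal s)

lemma mem_T {j : ℕ} {ab : ℕ × ℕ} : ab ∈ T j ↔ ab.1 + ab.2 ≤ j := by
  simp only [T, Finset.mem_biUnion, Finset.mem_range, Finset.HasAntidiagonal.mem_antidiagonal]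
  constructor
  · rintro ⟨s, hs, rfl⟩; omega
  · intro h; exact ⟨ab.1 + ab.2, by omega, rfl⟩

lemma coe_Tmap (j : ℕ) : ((T j).map e2 : Set (Fin 2 → ℕ)) = {x | x 0 + x 1 ≤ j} := by
  ext x
  simp only [Finset.coe_map, Set.mem_image, Finset.mem_coe, Set.mem_setOf_eq]
  constructor
  · rintro ⟨ab, hab, rfl⟩
    rw [mem_T] at hab
    simpa [show ∀ ab : ℕ × ℕ, e2 ab = ![ab.1, ab.2] from fun _ => rfl] using hab
  · intro h
    refine ⟨(x 0, x 1), mem_T.mpr h, ?_⟩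
    funext i
    fin_cases i <;> simp [show ∀ ab : ℕ × ℕ, e2 ab = ![ab.1, ab.2] from fun _ => rfl]

lemma sum_T (j : ℕ) (a b : ℝ) :
    ∑ ab ∈ T j, wR a ab.1 * wR b ab.2 = Gr j a b := by
  unfold T Gr
  rw [Finset.sum_biUnion]
  intro s hs t ht hst
  simp only [Function.onFun]
  rw [Finset.disjoint_left]
  intro ab h1 h2
  rw [Finset.HasAntidiagonal.mem_antidiagonal] at h1 h2
  exact hst (h1 ▸ h2.symm ▸ rfl)

lemma geomF_closed (n : ℕ) (p : Fin 2 → ℝ) (hp : ∀ i, p i ∈ Set.Ioc (0:ℝ) 1) :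
    geomF 2 (n+2) p
      = ENNReal.ofReal (S (n+1) (1-p 0) (1-p 1) - (1-p 0)*(1-p 1)*S n (1-p 0) (1-p 1)) := by
  haveI hP : ∀ i, IsProbabilityMeasure (geomMeasure (p i)) :=
    fun i => ⟨geomMeasure_univ (hp i)⟩
  set μ : Measure (Fin 2 → ℕ) := Measure.pi (fun i => geomMeasure (p i)) with hμ
  haveI : IsProbabilityMeasure μ := Measure.pi.instIsProbabilityMeasure _
  have hsingle : ∀ x : Fin 2 → ℕ,
      μ {x} = ENNReal.ofReal (wR (p 0) (x 0)) * ENNReal.ofReal (wR (p 1) (x 1)) := by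
    intro x
    rw [hμ, ← Set.univ_pi_singleton, Measure.pi_pi, Fin.prod_univ_two,
      geomMeasure_singleton, geomMeasure_singleton]
  -- measure of the complement finset
  have hfin : μ ((T (n+2)).map e2 : Set (Fin 2 → ℕ))
      = ENNReal.ofReal (Gr (n+2) (p 0) (p 1)) := by
    have hb : ((T (n+2)).map e2 : Set (Fin 2 → ℕ)) = ⋃ x ∈ ((T (n+2)).map e2), {x} := by
      ext x
      simp
    rw [hb, measure_biUnion_finset ?hd (fun b _ => measurableSet_singleton b)]
    case hd =>
      intro x _ y _ hxy
      simp [Function.onFun, Set.disjoint_singleton, hxy]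
    rw [Finset.sum_map]
    have hterm : ∀ ab ∈ T (n+2), μ {e2 ab} = ENNReal.ofReal (wR (p 0) ab.1 * wR (p 1) ab.2) := by
      intro ab _
      rw [hsingle]
      have h0 : e2 ab 0 = ab.1 := rfl
      have h1 : e2 ab 1 = ab.2 := rfl
      rw [h0, h1, ← ENNReal.ofReal_mul (wR_nonneg (hp 0) _)]
    rw [Finset.sum_congr rfl hterm, ← ENNReal.ofReal_sum_of_nonneg
      (fun ab _ => mul_nonneg (wR_nonneg (hp 0) _) (wR_nonneg (hp 1) _)), sum_T]
  -- identify the event with the complement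
  have hset : {x : Fin 2 → ℕ | (n+2:ℕ) < ∑ i, x i}
      = (((T (n+2)).map e2 : Set (Fin 2 → ℕ)))ᶜ := by
    rw [coe_Tmap]
    ext x
    simp [Fin.sum_univ_two]
  have hGr01 : 0 ≤ Gr (n+2) (p 0) (p 1) := by
    rw [← sum_T]
    exact Finset.sum_nonneg fun ab _ => mul_nonneg (wR_nonneg (hp 0) _) (wR_nonneg (hp 1) _)
  have : geomF 2 (n+2) p = μ (((T (n+2)).map e2 : Set (Fin 2 → ℕ)))ᶜ := by
    rw [geomF, ← hset]
  rw [this, measure_compl (((T (n+2)).map e2 : Set (Fin 2 → ℕ)).to_countable.measurableSet)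
      (measure_ne_top μ _), measure_univ, hfin]
  have hkey : ENNReal.ofReal (S (n+1) (1-p 0) (1-p 1) - (1-p 0)*(1-p 1)*S n (1-p 0) (1-p 1))
      = 1 - ENNReal.ofReal (Gr (n+2) (p 0) (p 1)) := by
    rw [show S (n+1) (1-p 0) (1-p 1) - (1-p 0)*(1-p 1)*S n (1-p 0) (1-p 1)
        = 1 - Gr (n+2) (p 0) (p 1) by rw [Gr_eq]; ring]
    rw [ENNReal.ofReal_sub 1 hGr01, ENNReal.ofReal_one]
  rw [hkey]

lemma key' (n : ℕ) {x y : ℝ} (hx : 0 ≤ x) (hy : 0 ≤ y) (hx1 : x < 1) (hy1 : y < 1)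
    (hne : x ≠ y) :
    S (n+1) ((x+y)/2) ((x+y)/2) - ((x+y)/2)*((x+y)/2)*S n ((x+y)/2) ((x+y)/2)
      < S (n+1) x y - x*y*S n x y := by
  rcases lt_or_gt_of_ne hne with h | h
  · have hk := key n hx hy1 hx1 h
    rw [S_symm (n+1) y x, S_symm n y x, mul_comm y x] at hk
    rw [show (y+x)/2 = (x+y)/2 by ring] at hk
    exact hk
  · exact key n hy hx1 hy1 h

lemma Fq_nonneg (n : ℕ) {q : ℝ} (h0 : 0 ≤ q) (h1 : q ≤ 1) :
    0 ≤ S (n+1) q q - q*q*S n q q := by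
  rw [S_diag, S_diag]
  have hqn : (0:ℝ) ≤ q^n := pow_nonneg h0 n
  have hps : q^(n+1) = q^n * q := pow_succ q n
  push_cast
  nlinarith [mul_nonneg (mul_nonneg hqn h0) (sub_nonneg.mpr h1), mul_nonneg hqn h0]

/-- For every integer `j ≥ 2` and all `p₁, p₂ ∈ (0,1]` with `p₁ ≠ p₂`,
`f_{2,j}(p₁, p₂) > f_{2,j}((p₁+p₂)/2, (p₁+p₂)/2)`. -/
theorem geomF_two_strict_gt_avg
    (j : ℕ) (hj : 2 ≤ j)
    (p₁ p₂ : ℝ) (hp₁ : p₁ ∈ Set.Ioc (0 : ℝ) 1) (hp₂ : p₂ ∈ Set.Ioc (0 : ℝ) 1)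
    (hne : p₁ ≠ p₂) :
    geomF 2 j ![(p₁ + p₂) / 2, (p₁ + p₂) / 2] < geomF 2 j ![p₁, p₂] := by
  obtain ⟨n, rfl⟩ : ∃ n, j = n + 2 := ⟨j - 2, by omega⟩
  have h1 := geomF_closed n ![p₁, p₂] (by intro i; fin_cases i <;> simpa)
  have h2 := geomF_closed n ![(p₁+p₂)/2, (p₁+p₂)/2] (by
    intro i
    have : (p₁+p₂)/2 ∈ Set.Ioc (0:ℝ) 1 :=
      ⟨by nlinarith [hp₁.1, hp₂.1], by nlinarith [hp₁.2, hp₂.2]⟩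
    fin_cases i <;> simpa)
  simp only [Matrix.cons_val_zero, Matrix.cons_val_one, Matrix.head_cons] at h1 h2
  rw [h1, h2]
  set x : ℝ := 1 - p₁ with hxd
  set y : ℝ := 1 - p₂ with hyd
  have hrw : 1 - (p₁+p₂)/2 = (x+y)/2 := by rw [hxd, hyd]; ring
  rw [hrw]
  have hx : 0 ≤ x := by rw [hxd]; linarith [hp₁.2]
  have hy : 0 ≤ y := by rw [hyd]; linarith [hp₂.2]
  have hx1 : x < 1 := by rw [hxd]; linarith [hp₁.1]
  have hy1 : y < 1 := by rw [hyd]; linarith [hp₂.1]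
  have hxyne : x ≠ y := by
    rw [hxd, hyd]
    intro h
    exact hne (by linarith)
  have hk := key' n hx hy hx1 hy1 hxyne
  have hq0 : 0 ≤ (x+y)/2 := by linarith
  have hq1 : (x+y)/2 ≤ 1 := by linarith
  have hpos : 0 < S (n+1) x y - x*y*S n x y :=
    lt_of_le_of_lt (Fq_nonneg n hq0 hq1) hk
  rw [ENNReal.ofReal_lt_ofReal_iff hpos]
  exact hk
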